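/- Let Φ : [0, ℓ] → ℝ^{n×n} be continuous and let Ψ : [0, ℓ] → ℝ^{n×n} be twice continuously differentiable with Ψ''(t) = Φ(t)Ψ(t) for all t ∈ [0, ℓ], Ψ(0) = A and Ψ'(0) = B. Let λ = max_{0 ≤ t ≤ ℓ} ‖Φ(t)‖_F and assume λ > 0. Then for all t with 0 ≤ t ≤ min(ℓ, 1/√λ), ‖Ψ(t) − A − Bt‖_F ≤ λ (t² ‖A‖₂ + (t³/5) ‖B‖₂). -/

import Mathlib

set_option maxHeartbeats 2000000

open Set Matrix

/-- The spectral (ℓ² operator) norm of a real square matrix. -/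
noncomputable def specNorm {n : ℕ} (A : Matrix (Fin n) (Fin n) ℝ) : ℝ :=
  ‖LinearMap.toContinuousLinearMap (Matrix.toEuclideanLin A)‖

/-- The Frobenius norm of a real square matrix. -/
noncomputable def frobNorm {n : ℕ} (A : Matrix (Fin n) (Fin n) ℝ) : ℝ :=
  Real.sqrt (∑ i, ∑ j, (A i j) ^ 2)

noncomputable def emb {ι : Type*} [Fintype ι] (v : ι → ℝ) : EuclideanSpace ℝ ι :=
  (EuclideanSpace.equiv ι ℝ).symm v

lemma emb_norm {ι : Type*} [Fintype ι] (v : ι → ℝ) :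
    ‖emb v‖ = Real.sqrt (∑ i, (v i) ^ 2) := by
  simp [emb, EuclideanSpace.norm_eq, Real.norm_eq_abs, sq_abs]

lemma emb_norm_sq {ι : Type*} [Fintype ι] (v : ι → ℝ) :
    ‖emb v‖ ^ 2 = ∑ i, (v i) ^ 2 := by
  rw [emb_norm, Real.sq_sqrt]
  exact Finset.sum_nonneg fun i _ => sq_nonneg _

lemma frobNorm_nonneg {n : ℕ} (A : Matrix (Fin n) (Fin n) ℝ) : 0 ≤ frobNorm A :=
  Real.sqrt_nonneg _

lemma sqrt_le_of_le_sq {s c : ℝ} (hc : 0 ≤ c) (h : s ≤ c ^ 2) : Real.sqrt s ≤ c := by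
  calc Real.sqrt s ≤ Real.sqrt (c ^ 2) := Real.sqrt_le_sqrt h
  _ = c := Real.sqrt_sq hc

section SpecL2
open scoped Matrix.Norms.L2Operator
variable {n : ℕ}

lemma specNorm_eq_l2 (A : Matrix (Fin n) (Fin n) ℝ) : specNorm A = ‖A‖ := rfl

lemma specNorm_nonneg (A : Matrix (Fin n) (Fin n) ℝ) : 0 ≤ specNorm A :=
  norm_nonneg (E := Matrix (Fin n) (Fin n) ℝ) A

lemma specNorm_add_le (A B : Matrix (Fin n) (Fin n) ℝ) :
    specNorm (A + B) ≤ specNorm A + specNorm B := norm_add_le A B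

lemma specNorm_smul (t : ℝ) (A : Matrix (Fin n) (Fin n) ℝ) :
    specNorm (t • A) = |t| * specNorm A := by
  show ‖t • A‖ = _
  rw [norm_smul, Real.norm_eq_abs]; rfl

lemma specNorm_transpose (A : Matrix (Fin n) (Fin n) ℝ) : specNorm Aᵀ = specNorm A := by
  have := Matrix.l2_opNorm_conjTranspose A
  rw [show Aᴴ = Aᵀ from rfl] at this
  exact this

lemma specNorm_mulVec (A : Matrix (Fin n) (Fin n) ℝ) (v : Fin n → ℝ) :
    ‖emb (A *ᵥ v)‖ ≤ specNorm A * ‖emb v‖ :=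
  Matrix.l2_opNorm_mulVec A (emb v)

end SpecL2

lemma specNorm_le_frobNorm {n : ℕ} (A : Matrix (Fin n) (Fin n) ℝ) :
    specNorm A ≤ frobNorm A := by
  apply ContinuousLinearMap.opNorm_le_bound _ (frobNorm_nonneg A)
  intro x
  have hx : x = emb (fun j => x j) := rfl
  have h1 : ‖(LinearMap.toContinuousLinearMap (Matrix.toEuclideanLin A)) x‖
      = ‖emb (A *ᵥ (fun j => x j))‖ := rfl
  rw [h1, hx, emb_norm, emb_norm]
  apply sqrt_le_of_le_sq (mul_nonneg (Real.sqrt_nonneg _) (Real.sqrt_nonneg _))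
  rw [mul_pow, Real.sq_sqrt (Finset.sum_nonneg fun j _ => sq_nonneg _)]
  have key : ∀ i, (A *ᵥ (fun j => x j)) i ^ 2 ≤ (∑ j, A i j ^ 2) * (∑ j, (x j) ^ 2) := by
    intro i
    have : (A *ᵥ (fun j => x j)) i = ∑ j, A i j * x j := by
      simp [Matrix.mulVec, dotProduct]
    rw [this]
    exact Finset.sum_mul_sq_le_sq_mul_sq _ _ _
  calc ∑ i, (A *ᵥ (fun j => x j)) i ^ 2 ≤ ∑ i, (∑ j, A i j ^ 2) * (∑ j, (x j) ^ 2) :=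
        Finset.sum_le_sum fun i _ => key i
    _ = Real.sqrt (∑ i, ∑ j, A i j ^ 2) ^ 2 * ∑ j, (x j) ^ 2 := by
        rw [Real.sq_sqrt (show (0:ℝ) ≤ ∑ i, ∑ j, A i j ^ 2 from
            Finset.sum_nonneg fun i _ => Finset.sum_nonneg fun j _ => sq_nonneg _),
          ← Finset.sum_mul]

lemma frobNorm_mul_le {n : ℕ} (X Y : Matrix (Fin n) (Fin n) ℝ) :
    frobNorm (X * Y) ≤ frobNorm X * specNorm Y := by
  unfold frobNorm
  apply sqrt_le_of_le_sq (mul_nonneg (Real.sqrt_nonneg _) (specNorm_nonneg Y))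
  have hrow : ∀ i, ∑ j, ((X * Y) i j) ^ 2 = ‖emb (Yᵀ *ᵥ (X i))‖ ^ 2 := by
    intro i
    rw [emb_norm_sq]
    refine Finset.sum_congr rfl fun j _ => ?_
    congr 1
    simp [Matrix.mul_apply, Matrix.mulVec, Matrix.transpose_apply, dotProduct, mul_comm]
  have hb : ∀ i, ‖emb (Yᵀ *ᵥ (X i))‖ ^ 2 ≤ (specNorm Y * ‖emb (X i)‖) ^ 2 := by
    intro i
    have := specNorm_mulVec Yᵀ (X i)
    rw [specNorm_transpose] at this
    exact pow_le_pow_left₀ (norm_nonneg _) this 2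
  calc ∑ i, ∑ j, ((X * Y) i j) ^ 2 ≤ ∑ i, (specNorm Y * ‖emb (X i)‖) ^ 2 := by
        refine Finset.sum_le_sum fun i _ => ?_
        rw [hrow i]; exact hb i
    _ = (specNorm Y) ^ 2 * ∑ i, ∑ j, (X i j) ^ 2 := by
        simp only [mul_pow, ← Finset.mul_sum, emb_norm_sq]
    _ = (Real.sqrt (∑ i, ∑ j, (X i j) ^ 2) * specNorm Y) ^ 2 := by
        rw [mul_pow,
          Real.sq_sqrt (show (0:ℝ) ≤ ∑ i, ∑ j, (X i j) ^ 2 from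
            Finset.sum_nonneg fun i _ => Finset.sum_nonneg fun j _ => sq_nonneg _)]
        ring

lemma emb_hasDerivAt {ι : Type*} [Fintype ι] {f : ℝ → ι → ℝ} {f' : ι → ℝ} {t : ℝ}
    (h : ∀ i, HasDerivAt (fun s => f s i) (f' i) t) :
    HasDerivAt (fun s => emb (f s)) (emb f') t := by
  have h0 : HasDerivAt f f' t := hasDerivAt_pi.2 h
  exact ((EuclideanSpace.equiv ι ℝ).symm.hasFDerivAt).comp_hasDerivAt t h0

lemma poly_hasDerivAt (c1 c2 c3 c4 c5 x : ℝ) :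
    HasDerivAt (fun t => c1*t + c2*t^2 + c3*t^3 + c4*t^4 + c5*t^5)
      (c1 + 2*c2*x + 3*c3*x^2 + 4*c4*x^3 + 5*c5*x^4) x := by
  have h := (((((hasDerivAt_id x).const_mul c1).add
      ((hasDerivAt_pow 2 x).const_mul c2)).add
      ((hasDerivAt_pow 3 x).const_mul c3)).add
      ((hasDerivAt_pow 4 x).const_mul c4)).add
      ((hasDerivAt_pow 5 x).const_mul c5)
  have h2 : HasDerivAt (fun t : ℝ => c1*t + c2*t^2 + c3*t^3 + c4*t^4 + c5*t^5)
      (c1 * 1 + (2:ℕ) * x ^ (2-1) * c2 + (3:ℕ) * x^(3-1) * c3 + (4:ℕ)*x^(4-1) * c4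
        + (5:ℕ)*x^(5-1) * c5) x := by
    exact (h.congr_deriv (by push_cast; ring)).congr_of_eventuallyEq
      (Filter.Eventually.of_forall fun t => by simp)
  convert h2 using 1
  push_cast; ring

lemma exp_sub_one_le {x : ℝ} (hx0 : 0 ≤ x) (hx1 : x ≤ 1) :
    Real.exp x - 1 ≤ Real.exp 1 * x := by
  have h1 : Real.exp x ≤ Real.exp 1 := Real.exp_le_exp.2 hx1
  have h2 : 1 - x ≤ Real.exp (-x) := by linarith [Real.add_one_le_exp (-x)]
  have h3 : Real.exp (-x) * Real.exp x = 1 := by rw [← Real.exp_add]; simp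
  nlinarith [Real.exp_pos x, mul_le_mul_of_nonneg_right h2 (Real.exp_pos x).le,
    mul_le_mul_of_nonneg_right h1 hx0]

/-- second-order Taylor estimate for the solution of `Ψ'' = Φ Ψ`. -/
theorem matrix_ode_taylor_estimate
    (n : ℕ) (ℓ : ℝ) (hℓ : 0 ≤ ℓ)
    (Φ Ψ Ψ' : ℝ → Matrix (Fin n) (Fin n) ℝ)
    (A B : Matrix (Fin n) (Fin n) ℝ)
    (hΦcont : ∀ i j, ContinuousOn (fun t => Φ t i j) (Icc 0 ℓ))
    (hΨ : ∀ t ∈ Icc 0 ℓ, ∀ i j, HasDerivAt (fun s => Ψ s i j) (Ψ' t i j) t)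
    (hΨ' : ∀ t ∈ Icc 0 ℓ, ∀ i j, HasDerivAt (fun s => Ψ' s i j) ((Φ t * Ψ t) i j) t)
    (hA : Ψ 0 = A) (hB : Ψ' 0 = B)
    (lam : ℝ)
    (hlam : IsGreatest ((fun t => frobNorm (Φ t)) '' Icc 0 ℓ) lam)
    (hlampos : 0 < lam) :
    ∀ t : ℝ, 0 ≤ t → t ≤ min ℓ (1 / Real.sqrt lam) →
      frobNorm (Ψ t - A - t • B) ≤
        lam * (t ^ 2 * specNorm A + (t ^ 3 / 5) * specNorm B) := by
  intro t ht0 htT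
  set M : ℝ := Real.sqrt lam with hMdef
  have hM : 0 < M := Real.sqrt_pos.2 hlampos
  have hM2 : M ^ 2 = lam := Real.sq_sqrt hlampos.le
  set T : ℝ := min ℓ (1 / M) with hTdef
  have hT0 : 0 ≤ T := le_min hℓ (one_div_nonneg.2 hM.le)
  have hTℓ : T ≤ ℓ := min_le_left _ _
  have hMT : M * T ≤ 1 := by
    have h1 : T ≤ 1 / M := min_le_right _ _
    calc M * T ≤ M * (1 / M) := by nlinarith
    _ = 1 := by field_simp
  have htmem : t ∈ Icc 0 T := ⟨ht0, htT⟩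
  have hIccsub : Icc (0:ℝ) T ⊆ Icc 0 ℓ := Icc_subset_Icc le_rfl hTℓ
  have hIcosub : Ico (0:ℝ) T ⊆ Icc 0 ℓ := fun x hx => ⟨hx.1, hx.2.le.trans hTℓ⟩
  have hIcosub' : Ico (0:ℝ) T ⊆ Icc 0 T := Ico_subset_Icc_self
  set aa : ℝ := specNorm A with haadef
  set bb : ℝ := specNorm B with hbbdef
  have ha0 : 0 ≤ aa := specNorm_nonneg A
  have hb0 : 0 ≤ bb := specNorm_nonneg B
  set E1 : ℝ := Real.exp 1 with hE1def
  have hE0 : 0 < E1 := Real.exp_pos 1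
  have hE3 : E1 ≤ 3 := by
    have := Real.exp_one_lt_d9; rw [← hE1def] at this; linarith
  set C : ℝ := aa + T * bb with hCdef
  have hC0 : 0 ≤ C := by positivity
  have hΦle : ∀ s ∈ Icc 0 ℓ, frobNorm (Φ s) ≤ lam := fun s hs => hlam.2 ⟨s, hs, rfl⟩
  -- the vector-valued functions
  set F : ℝ → EuclideanSpace ℝ (Fin n × Fin n) :=
    fun s => emb (fun p => Ψ s p.1 p.2 - A p.1 p.2 - s * B p.1 p.2) with hFdef
  set G : ℝ → EuclideanSpace ℝ (Fin n × Fin n) :=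
    fun s => emb (fun p => Ψ' s p.1 p.2 - B p.1 p.2) with hGdef
  set H : ℝ → EuclideanSpace ℝ (Fin n × Fin n) :=
    fun s => emb (fun p => (Φ s * Ψ s) p.1 p.2) with hHdef
  have hFd : ∀ s ∈ Icc 0 ℓ, HasDerivAt F (G s) s := by
    intro s hs
    apply emb_hasDerivAt
    intro p
    exact ((hΨ s hs p.1 p.2).sub_const _).sub (hasDerivAt_mul_const _)
  have hGd : ∀ s ∈ Icc 0 ℓ, HasDerivAt G (H s) s := by
    intro s hs
    apply emb_hasDerivAt
    intro p
    exact (hΨ' s hs p.1 p.2).sub_const _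
  have hFc : ContinuousOn F (Icc 0 T) :=
    fun x hx => ((hFd x (hIccsub hx)).continuousAt).continuousWithinAt
  have hGc : ContinuousOn G (Icc 0 T) :=
    fun x hx => ((hGd x (hIccsub hx)).continuousAt).continuousWithinAt
  have nF : ∀ s : ℝ, ‖F s‖ = frobNorm (Ψ s - A - s • B) := by
    intro s
    rw [hFdef, emb_norm, frobNorm, Fintype.sum_prod_type]
    apply congrArg Real.sqrt
    refine Finset.sum_congr rfl fun i _ => Finset.sum_congr rfl fun j _ => ?_
    simp [Matrix.sub_apply, Matrix.smul_apply, smul_eq_mul]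
  have nH : ∀ s : ℝ, ‖H s‖ = frobNorm (Φ s * Ψ s) := by
    intro s
    rw [hHdef, emb_norm, frobNorm, Fintype.sum_prod_type]
  have F0 : F 0 = 0 := by
    have h1 : F 0 = emb (fun _ => (0:ℝ)) := by
      rw [hFdef]; beta_reduce; congr 1; funext p; simp [hA]
    rw [h1]
    exact map_zero (EuclideanSpace.equiv (Fin n × Fin n) ℝ).symm
  have G0 : G 0 = 0 := by
    have h1 : G 0 = emb (fun _ => (0:ℝ)) := by
      rw [hGdef]; beta_reduce; congr 1; funext p; simp [hB]
    rw [h1]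
    exact map_zero (EuclideanSpace.equiv (Fin n × Fin n) ℝ).symm
  -- pointwise bound on the second derivative
  have key : ∀ s ∈ Icc (0:ℝ) T, ‖H s‖ ≤ lam * (aa + s * bb + ‖F s‖) := by
    intro s hs
    have hs' := hIccsub hs
    have h3 : specNorm (Ψ s) ≤ aa + s * bb + ‖F s‖ := by
      have hdecomp : Ψ s = A + s • B + (Ψ s - A - s • B) := by abel
      have e1 : specNorm (Ψ s) ≤ specNorm (A + s • B) + specNorm (Ψ s - A - s • B) := by
        conv_lhs => rw [hdecomp]
        exact specNorm_add_le _ _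
      have e2 : specNorm (A + s • B) ≤ aa + specNorm (s • B) := specNorm_add_le A _
      have e3 : specNorm (s • B) = s * bb := by
        rw [specNorm_smul, abs_of_nonneg hs.1, hbbdef]
      have e4 : specNorm (Ψ s - A - s • B) ≤ frobNorm (Ψ s - A - s • B) :=
        specNorm_le_frobNorm _
      rw [nF s]
      linarith
    calc ‖H s‖ = frobNorm (Φ s * Ψ s) := nH s
    _ ≤ frobNorm (Φ s) * specNorm (Ψ s) := frobNorm_mul_le _ _
    _ ≤ lam * (aa + s * bb + ‖F s‖) :=
        mul_le_mul (hΦle s hs') h3 (specNorm_nonneg _) hlampos.le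
  -- Pass 1 : Gronwall on the pair (M • F, G)
  have pass1 : ∀ s ∈ Icc (0:ℝ) T, ‖F s‖ ≤ E1 * C * (M * s) := by
    set u : ℝ → EuclideanSpace ℝ (Fin n × Fin n) × EuclideanSpace ℝ (Fin n × Fin n) :=
      fun s => (M • F s, G s) with hudef
    have huc : ContinuousOn u (Icc 0 T) := (hFc.const_smul M).prodMk hGc
    have hud : ∀ x ∈ Ico (0:ℝ) T, HasDerivWithinAt u ((M • G x, H x)) (Ici x) x :=
      fun x hx => (((hFd x (hIcosub hx)).const_smul M).prodMk (hGd x (hIcosub hx))).hasDerivWithinAt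
    have hu0 : ‖u 0‖ ≤ 0 := by
      rw [hudef]
      simp [F0, G0]
    have hbound : ∀ x ∈ Ico (0:ℝ) T, ‖(M • G x, H x)‖ ≤ M * ‖u x‖ + lam * (aa + T * bb) := by
      intro x hx
      have hkey := key x (hIcosub' hx)
      have hF1 : ‖(u x).1‖ ≤ ‖u x‖ := norm_fst_le (u x)
      have hG2 : ‖(u x).2‖ ≤ ‖u x‖ := norm_snd_le (u x)
      have hu1 : ‖(u x).1‖ = M * ‖F x‖ := by
        rw [hudef]; simp [norm_smul, abs_of_nonneg hM.le]
      have hu2 : ‖(u x).2‖ = ‖G x‖ := by rw [hudef]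
      have hnn : 0 ≤ lam * (aa + T * bb) := by positivity
      rw [Prod.norm_def]
      apply max_le
      · have : ‖M • G x‖ = M * ‖G x‖ := by simp [norm_smul, abs_of_nonneg hM.le]
        rw [this]
        have : M * ‖G x‖ ≤ M * ‖u x‖ := by
          apply mul_le_mul_of_nonneg_left _ hM.le
          rw [← hu2]; exact hG2
        linarith
      · have hxT : x ≤ T := hx.2.le
        have hMF : lam * ‖F x‖ ≤ M * ‖u x‖ := by
          have : M * ‖F x‖ ≤ ‖u x‖ := by rw [← hu1]; exact hF1
          calc lam * ‖F x‖ = M * (M * ‖F x‖) := by rw [← hM2]; ring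
          _ ≤ M * ‖u x‖ := mul_le_mul_of_nonneg_left this hM.le
        have hxb : lam * (aa + x * bb) ≤ lam * (aa + T * bb) := by nlinarith [mul_nonneg (mul_nonneg hlampos.le hb0) (sub_nonneg.2 hxT)]
        calc ‖H x‖ ≤ lam * (aa + x * bb + ‖F x‖) := hkey
        _ = lam * (aa + x * bb) + lam * ‖F x‖ := by ring
        _ ≤ M * ‖u x‖ + lam * (aa + T * bb) := by linarith
    have hgron := norm_le_gronwallBound_of_norm_deriv_right_le huc hud hu0 hbound
    intro s hs
    have h := hgron s hs
    rw [sub_zero, gronwallBound_of_K_ne_0 hM.ne'] at h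
    have hMs0 : 0 ≤ M * s := mul_nonneg hM.le hs.1
    have hMs1 : M * s ≤ 1 := by
      calc M * s ≤ M * T := mul_le_mul_of_nonneg_left hs.2 hM.le
      _ ≤ 1 := hMT
    have hexp := exp_sub_one_le hMs0 hMs1
    have hFu : M * ‖F s‖ ≤ ‖u s‖ := by
      have h1 : ‖(u s).1‖ ≤ ‖u s‖ := norm_fst_le (u s)
      have h2 : ‖(u s).1‖ = M * ‖F s‖ := by
        rw [hudef]; simp [norm_smul, abs_of_nonneg hM.le]
      linarith
    have hnn : (0:ℝ) ≤ lam * (aa + T * bb) / M := by positivity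
    have h2 : M * ‖F s‖ ≤ lam * (aa + T * bb) / M * (E1 * (M * s)) := by
      calc M * ‖F s‖ ≤ ‖u s‖ := hFu
      _ ≤ 0 * Real.exp (M * s) + lam * (aa + T * bb) / M * (Real.exp (M * s) - 1) := h
      _ ≤ lam * (aa + T * bb) / M * (E1 * (M * s)) := by
          rw [zero_mul, zero_add]
          exact mul_le_mul_of_nonneg_left hexp hnn
    have h3 : lam * (aa + T * bb) / M * (E1 * (M * s)) = M * (E1 * C * (M * s)) := by
      rw [hCdef]
      field_simp
      rw [← hM2]
      ring
    rw [h3] at h2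
    exact le_of_mul_le_mul_left h2 hM
  -- Pass 2 : first bound on G
  have pass2 : ∀ s ∈ Icc (0:ℝ) T, ‖G s‖ ≤
      (lam*aa)*s + (lam*bb/2 + E1*lam*M*C/2)*s^2 + 0*s^3 + 0*s^4 + 0*s^5 := by
    refine image_norm_le_of_norm_deriv_right_le_deriv_boundary hGc
      (fun x hx => (hGd x (hIcosub hx)).hasDerivWithinAt) ?_ (poly_hasDerivAt _ _ _ _ _) ?_
    · rw [G0, norm_zero]; norm_num
    · intro x hx
      have hkey := key x (hIcosub' hx)
      have hp1 := pass1 x (hIcosub' hx)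
      have hlF : lam * ‖F x‖ ≤ lam * (E1 * C * (M * x)) :=
        mul_le_mul_of_nonneg_left hp1 hlampos.le
      have : ‖H x‖ ≤ lam * (aa + x * bb) + lam * (E1 * C * (M * x)) := by
        calc ‖H x‖ ≤ lam * (aa + x * bb + ‖F x‖) := hkey
        _ = lam * (aa + x * bb) + lam * ‖F x‖ := by ring
        _ ≤ _ := by linarith
      calc ‖H x‖ ≤ lam * (aa + x * bb) + lam * (E1 * C * (M * x)) := this
      _ = (lam*aa) + 2*(lam*bb/2 + E1*lam*M*C/2)*x + 3*0*x^2 + 4*0*x^3 + 5*0*x^4 := by ring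
  -- Pass 3 : first bound on F
  have pass3 : ∀ s ∈ Icc (0:ℝ) T, ‖F s‖ ≤
      0*s + (lam*aa/2)*s^2 + (lam*bb/6 + E1*lam*M*C/6)*s^3 + 0*s^4 + 0*s^5 := by
    refine image_norm_le_of_norm_deriv_right_le_deriv_boundary hFc
      (fun x hx => (hFd x (hIcosub hx)).hasDerivWithinAt) ?_ (poly_hasDerivAt _ _ _ _ _) ?_
    · rw [F0, norm_zero]; norm_num
    · intro x hx
      have hp2 := pass2 x (hIcosub' hx)
      calc ‖G x‖ ≤ (lam*aa)*x + (lam*bb/2 + E1*lam*M*C/2)*x^2 + 0*x^3 + 0*x^4 + 0*x^5 := hp2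
      _ = 0 + 2*(lam*aa/2)*x + 3*(lam*bb/6 + E1*lam*M*C/6)*x^2 + 4*0*x^3 + 5*0*x^4 := by ring
  -- Pass 4 : second bound on G
  have pass4 : ∀ s ∈ Icc (0:ℝ) T, ‖G s‖ ≤
      (lam*aa)*s + (lam*bb/2)*s^2 + (lam^2*aa/6)*s^3
        + (lam^2*bb/24 + E1*lam^2*M*C/24)*s^4 + 0*s^5 := by
    refine image_norm_le_of_norm_deriv_right_le_deriv_boundary hGc
      (fun x hx => (hGd x (hIcosub hx)).hasDerivWithinAt) ?_ (poly_hasDerivAt _ _ _ _ _) ?_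
    · rw [G0, norm_zero]; norm_num
    · intro x hx
      have hkey := key x (hIcosub' hx)
      have hp3 := pass3 x (hIcosub' hx)
      have hlF : lam * ‖F x‖ ≤
          lam * (0*x + (lam*aa/2)*x^2 + (lam*bb/6 + E1*lam*M*C/6)*x^3 + 0*x^4 + 0*x^5) :=
        mul_le_mul_of_nonneg_left hp3 hlampos.le
      calc ‖H x‖ ≤ lam * (aa + x * bb + ‖F x‖) := hkey
      _ = lam * (aa + x * bb) + lam * ‖F x‖ := by ring
      _ ≤ lam * (aa + x * bb)
          + lam * (0*x + (lam*aa/2)*x^2 + (lam*bb/6 + E1*lam*M*C/6)*x^3 + 0*x^4 + 0*x^5) := by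
          linarith
      _ = (lam*aa) + 2*(lam*bb/2)*x + 3*(lam^2*aa/6)*x^2
          + 4*(lam^2*bb/24 + E1*lam^2*M*C/24)*x^3 + 5*0*x^4 := by ring
  -- Pass 5 : final bound on F
  have pass5 : ∀ s ∈ Icc (0:ℝ) T, ‖F s‖ ≤
      0*s + (lam*aa/2)*s^2 + (lam*bb/6)*s^3 + (lam^2*aa/24)*s^4
        + (lam^2*bb/120 + E1*lam^2*M*C/120)*s^5 := by
    refine image_norm_le_of_norm_deriv_right_le_deriv_boundary hFc
      (fun x hx => (hFd x (hIcosub hx)).hasDerivWithinAt) ?_ (poly_hasDerivAt _ _ _ _ _) ?_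
    · rw [F0, norm_zero]; norm_num
    · intro x hx
      have hp4 := pass4 x (hIcosub' hx)
      calc ‖G x‖ ≤ (lam*aa)*x + (lam*bb/2)*x^2 + (lam^2*aa/6)*x^3
          + (lam^2*bb/24 + E1*lam^2*M*C/24)*x^4 + 0*x^5 := hp4
      _ = 0 + 2*(lam*aa/2)*x + 3*(lam*bb/6)*x^2 + 4*(lam^2*aa/24)*x^3
          + 5*(lam^2*bb/120 + E1*lam^2*M*C/120)*x^4 := by ring
  -- conclude
  have hfinal := pass5 t htmem
  rw [nF t] at hfinal
  have htT' : t ≤ T := htmem.2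
  have hMt0 : 0 ≤ M * t := mul_nonneg hM.le ht0
  have hMt1 : M * t ≤ 1 := by
    calc M * t ≤ M * T := mul_le_mul_of_nonneg_left htT' hM.le
    _ ≤ 1 := hMT
  have hq : lam * t^2 ≤ 1 := by
    have : (M*t)^2 ≤ 1 := by nlinarith
    calc lam * t^2 = (M*t)^2 := by rw [← hM2]; ring
    _ ≤ 1 := this
  have hq0 : 0 ≤ lam * t^2 := by positivity
  have h4a : lam^2*aa*t^4 ≤ lam*aa*t^2 := by nlinarith [mul_nonneg (mul_nonneg (mul_nonneg hlampos.le ha0) (sq_nonneg t)) (sub_nonneg.2 hq)]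
  have h5b : lam^2*bb*t^5 ≤ lam*bb*t^3 := by nlinarith [mul_nonneg (mul_nonneg hlampos.le hb0) (pow_nonneg ht0 3)]
  have h5a : E1*lam^2*M*aa*t^5 ≤ E1*lam*aa*t^2 := by
    have hx : lam^2*M*t^5 ≤ lam*t^2 := by
      have : lam^2*M*t^5 = (lam*t^2)*(lam*t^2)*(M*t) := by ring
      rw [this]
      nlinarith
    nlinarith [mul_le_mul_of_nonneg_left hx (mul_nonneg hE0.le ha0)]
  have h5Tb : E1*lam^2*M*T*bb*t^5 ≤ E1*lam*bb*t^3 := by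
    have hx : lam^2*M*T*t^5 ≤ lam*t^3 := by
      have heq : lam^2*M*T*t^5 = (lam*t^2)*((M*t)^2*(M*T))*t := by rw [← hM2]; ring
      have h1 : (M*t)^2*(M*T) ≤ 1 := by nlinarith
      have h2 : 0 ≤ (M*t)^2*(M*T) := by positivity
      rw [heq]
      nlinarith [mul_nonneg hlampos.le (pow_nonneg ht0 3)]
    nlinarith [mul_le_mul_of_nonneg_left hx (mul_nonneg hE0.le hb0)]
  have hEa : E1 * (lam*aa*t^2) ≤ 3 * (lam*aa*t^2) :=
    mul_le_mul_of_nonneg_right hE3 (by positivity)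
  have hEb : E1 * (lam*bb*t^3) ≤ 3 * (lam*bb*t^3) :=
    mul_le_mul_of_nonneg_right hE3 (by positivity)
  have hexpand : 0*t + (lam*aa/2)*t^2 + (lam*bb/6)*t^3 + (lam^2*aa/24)*t^4
        + (lam^2*bb/120 + E1*lam^2*M*C/120)*t^5
      = (lam*aa/2)*t^2 + (lam*bb/6)*t^3 + (lam^2*aa*t^4)/24
        + (lam^2*bb*t^5)/120 + (E1*lam^2*M*aa*t^5)/120 + (E1*lam^2*M*T*bb*t^5)/120 := by
    rw [hCdef]; ring
  rw [hexpand] at hfinal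
  have hgoal : (lam*aa/2)*t^2 + (lam*bb/6)*t^3 + (lam^2*aa*t^4)/24
        + (lam^2*bb*t^5)/120 + (E1*lam^2*M*aa*t^5)/120 + (E1*lam^2*M*T*bb*t^5)/120
      ≤ lam * (t ^ 2 * aa + (t ^ 3 / 5) * bb) := by
    nlinarith [mul_nonneg (mul_nonneg hlampos.le ha0) (sq_nonneg t),
      mul_nonneg (mul_nonneg hlampos.le hb0) (pow_nonneg ht0 3)]
  linarith
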